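/- For every Borel set A ⊆ ℝ^ν and every t ∈ ℝ^ν, Leb_ν(A ∩ (A − t)) ≤ 2 · Leb_ν(A ∩ {s ∈ ℝ^ν : |s| ≥ |t|/2}), where A − t := {s ∈ ℝ^ν : s + t ∈ A} and |·| denotes the Euclidean norm on ℝ^ν. -/
import Mathlib

open MeasureTheory Set

/-- for every Borel set `A ⊆ ℝ^ν` and `t ∈ ℝ^ν`,
`Leb_ν(A ∩ (A − t)) ≤ 2 Leb_ν(A ∩ {|s| ≥ |t|/2})`. -/
theorem stmt_1 (ν : ℕ) (hν : 1 ≤ ν)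
    (A : Set (EuclideanSpace ℝ (Fin ν))) (hA : MeasurableSet A)
    (t : EuclideanSpace ℝ (Fin ν)) :
    volume (A ∩ {s | s + t ∈ A}) ≤ 2 * volume (A ∩ {s | ‖t‖ / 2 ≤ ‖s‖}) := by
  set B := A ∩ {s | ‖t‖ / 2 ≤ ‖s‖} with hB
  have hsub : A ∩ {s | s + t ∈ A} ⊆ B ∪ ((· + t) ⁻¹' B) := by
    intro s hs
    rcases hs with ⟨hsA, hstA⟩
    have h : ‖t‖ / 2 ≤ ‖s‖ ∨ ‖t‖ / 2 ≤ ‖s + t‖ := by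
      by_contra hc
      push_neg at hc
      have : ‖t‖ ≤ ‖s + t‖ + ‖s‖ := by
        calc ‖t‖ = ‖(s + t) - s‖ := by rw [add_sub_cancel_left]
          _ ≤ ‖s + t‖ + ‖s‖ := norm_sub_le _ _
      linarith [hc.1, hc.2]
    rcases h with h | h
    · exact Or.inl ⟨hsA, h⟩
    · exact Or.inr ⟨hstA, h⟩
  calc volume (A ∩ {s | s + t ∈ A}) ≤ volume (B ∪ ((· + t) ⁻¹' B)) :=
        measure_mono hsub
    _ ≤ volume B + volume ((· + t) ⁻¹' B) := measure_union_le _ _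
    _ = volume B + volume B := by rw [measure_preimage_add_right]
    _ = 2 * volume B := (two_mul _).symm
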